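/- Conditioning reduces conditional weighted entropy: Let f(x₁,x₂,x₃) be a joint probability density on X₁ × X₂ × X₃ with respect to ν₁ ⊗ ν₂ ⊗ ν₃, with marginals f₂, f₂₃ and conditional densities f_{1|2}(x₁|x₂) = f₁₂(x₁,x₂)/f₂(x₂) and f_{1|23}(x₁|x₂,x₃) = f(x₁,x₂,x₃)/f₂₃(x₂,x₃), and let φ : X₁ × X₂ × X₃ → [0,∞) be a measurable weight function such that all integrals involved converge absolutely. If ∫ φ(x₁,x₂,x₃)·( f(x₁,x₂,x₃) − f₂(x₂)·f_{1|2}(x₁|x₂)·f_{3|2}(x₃|x₂) ) dν₁dν₂dν₃ ≥ 0, then −∫ φ·f·log f_{1|23}(x₁|x₂,x₃) dν₁dν₂dν₃ ≤ −∫ φ·f·log f_{1|2}(x₁|x₂) dν₁dν₂dν₃; equality holds if and only if, modulo φ, X₁ and X₃ are conditionally independent given X₂ (i.e. φ·(f − f₂·f_{1|2}·f_{3|2}) = 0 for f-almost all (x₁,x₂,x₃)). -/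

import Mathlib

open MeasureTheory Real

section aux
variable {α β : Type*} [MeasurableSpace α] [MeasurableSpace β]
  {μ : Measure α} {ν : Measure β} [SigmaFinite μ] [SigmaFinite ν]

lemma measurableSet_imp' {γ : Type*} [MeasurableSpace γ] {s t : Set γ}
    (hs : MeasurableSet s) (ht : MeasurableSet t) :
    MeasurableSet {x | x ∈ s → x ∈ t} := by
  have h : {x | x ∈ s → x ∈ t} = sᶜ ∪ t := by
    ext x; simp [imp_iff_not_or]
  rw [h]; exact hs.compl.union ht

lemma marg_snd_pos {g : α × β → ℝ} (hgm : Measurable g) (hg0 : ∀ z, 0 ≤ g z)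
    (hgi : Integrable g (μ.prod ν)) :
    ∀ᵐ z ∂μ.prod ν, 0 < g z → 0 < ∫ y, g (z.1, y) ∂ν := by
  have hM : Measurable fun x => ∫ y, g (x, y) ∂ν :=
    (hgm.stronglyMeasurable.integral_prod_right').measurable
  refine (Measure.ae_prod_iff_ae_ae ?_).mpr ?_
  · exact measurableSet_imp' (measurableSet_lt measurable_const hgm)
      (measurableSet_lt measurable_const (hM.comp measurable_fst))
  · filter_upwards [hgi.prod_right_ae] with x hx
    rcases eq_or_lt_of_le (integral_nonneg (f := fun y => g (x, y)) (fun y => hg0 (x, y))) with h0 | hpos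
    · have h1 : ∫⁻ y, ENNReal.ofReal (g (x, y)) ∂ν = 0 := by
        rw [← ofReal_integral_eq_lintegral_ofReal hx
          (Filter.Eventually.of_forall fun y => hg0 (x, y)), ← h0, ENNReal.ofReal_zero]
      have h2 := (lintegral_eq_zero_iff'
        ((ENNReal.measurable_ofReal.comp (hgm.comp measurable_prodMk_left)).aemeasurable)).mp h1
      filter_upwards [h2] with y hy hgy
      exact absurd hy (ENNReal.ofReal_pos.mpr hgy).ne'
    · exact Filter.Eventually.of_forall fun y _ => hpos

lemma marg_fst_pos {g : α × β → ℝ} (hgm : Measurable g) (hg0 : ∀ z, 0 ≤ g z)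
    (hgi : Integrable g (μ.prod ν)) :
    ∀ᵐ z ∂μ.prod ν, 0 < g z → 0 < ∫ x, g (x, z.2) ∂μ := by
  have h := marg_snd_pos (μ := ν) (ν := μ) (g := fun w => g (w.2, w.1))
    (hgm.comp measurable_swap) (fun w => hg0 _) hgi.swap
  have h2 := (Measure.measurePreserving_swap (μ := μ) (ν := ν)).quasiMeasurePreserving.ae h
  filter_upwards [h2] with z hz
  exact hz

lemma lift_pair {γ : Type*} [MeasurableSpace γ] (ρ : Measure γ) [SigmaFinite ρ]
    {T : α × β → Prop} (hT : MeasurableSet {w | T w}) (h : ∀ᵐ w ∂μ.prod ν, T w) :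
    ∀ᵐ p ∂μ.prod (ν.prod ρ), T (p.1, p.2.1) := by
  have h1 := Measure.ae_ae_of_ae_prod h
  refine (Measure.ae_prod_iff_ae_ae ?_).mpr ?_
  · exact (measurable_fst.prodMk (measurable_fst.comp measurable_snd)) hT
  · filter_upwards [h1] with x hx
    exact Measure.quasiMeasurePreserving_fst.ae hx

lemma key_ineq {a b c d w : ℝ} (ha : 0 ≤ a) (hw : 0 ≤ w) (hb : 0 ≤ b) (hc : 0 ≤ c) (hd : 0 ≤ d)
    (h1 : 0 < a → 0 < d) (h2 : 0 < a → 0 < b) (h3 : 0 < b → 0 < c) :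
    w * (a - c * (b / c) * (d / c)) ≤ w * a * log (a / d) - w * a * log (b / c) ∧
    (w * a * log (a / d) - w * a * log (b / c) = w * (a - c * (b / c) * (d / c)) →
      (0 < a → w * (a - c * (b / c) * (d / c)) = 0)) ∧
    ((0 < a → w * (a - c * (b / c) * (d / c)) = 0) →
      w * a * log (a / d) = w * a * log (b / c)) := by
  rcases eq_or_lt_of_le ha with ha0 | hapos
  · rw [← ha0]
    have hG : 0 ≤ c * (b / c) * (d / c) := by positivity
    refine ⟨?_, ?_, ?_⟩
    · have : w * (0 - c * (b / c) * (d / c)) ≤ 0 := by nlinarith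
      simpa using this
    · intro _ h; exact absurd h (lt_irrefl 0)
    · intro _; ring
  · have hd' := h1 hapos
    have hb' := h2 hapos
    have hc' := h3 hb'
    have hG : c * (b / c) * (d / c) = b * d / c := by
      field_simp
    have hGpos : 0 < b * d / c := by positivity
    have htpos : 0 < b * d / c / a := by positivity
    have hlog : log (a / d) - log (b / c) = -(log (b * d / c / a)) := by
      rw [log_div hapos.ne' hd'.ne', log_div hb'.ne' hc'.ne',
        log_div hGpos.ne' hapos.ne', log_div (by positivity : (0:ℝ) < b * d).ne' hc'.ne',
        log_mul hb'.ne' hd'.ne']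
      ring
    have e1 : w * a * log (a / d) - w * a * log (b / c) - w * (a - c * (b / c) * (d / c))
        = w * a * (b * d / c / a - 1 - log (b * d / c / a)) := by
      have h' : w * a * log (a / d) - w * a * log (b / c)
          = w * a * (log (a / d) - log (b / c)) := by ring
      rw [h', hlog, hG]
      field_simp
      ring
    have hkey : log (b * d / c / a) ≤ b * d / c / a - 1 := log_le_sub_one_of_pos htpos
    have hnn : 0 ≤ w * a * (b * d / c / a - 1 - log (b * d / c / a)) :=
      mul_nonneg (mul_nonneg hw ha) (by linarith)
    refine ⟨by linarith, ?_, ?_⟩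
    · intro heq _
      have hz : w * a * (b * d / c / a - 1 - log (b * d / c / a)) = 0 := by linarith
      rcases mul_eq_zero.mp hz with hwa | ht
      · rcases mul_eq_zero.mp hwa with hw0 | ha0
        · rw [hw0, zero_mul]
        · exact absurd ha0 hapos.ne'
      · have ht1 : b * d / c / a = 1 := by
          by_contra hne
          have := log_lt_sub_one_of_pos htpos hne
          linarith
        have haeq : a = b * d / c := by
          field_simp at ht1 ⊢
          linear_combination -ht1
        rw [hG, ← haeq, sub_self, mul_zero]
    · intro h
      rcases mul_eq_zero.mp (h hapos) with hw0 | hsub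
      · rw [hw0]; ring
      · rw [hG] at hsub
        have haG : a = b * d / c := by linarith
        have : a / d = b / c := by
          rw [haG]; field_simp
        rw [this]

end aux


/-- **Conditioning reduces conditional weighted entropy.** For a joint probability
density `f` on `X₁ × X₂ × X₃` with marginals `f₂, f₂₃`, pair marginal `f₁₂`,
conditional densities `f_{1|2} = f₁₂/f₂`, `f_{3|2} = f₂₃/f₂`, `f_{1|23} = f/f₂₃`, if
`∫ φ (f - f₂ f_{1|2} f_{3|2}) ≥ 0` then
`-∫ φ f log f_{1|23} ≤ -∫ φ f log f_{1|2}`, with equality iff, modulo `φ`,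
`X₁` and `X₃` are conditionally independent given `X₂`. -/
theorem conditional_weighted_entropy_mono
    {X₁ X₂ X₃ : Type*} [MeasurableSpace X₁] [MeasurableSpace X₂] [MeasurableSpace X₃]
    (ν₁ : Measure X₁) (ν₂ : Measure X₂) (ν₃ : Measure X₃)
    [SigmaFinite ν₁] [SigmaFinite ν₂] [SigmaFinite ν₃]
    (f φ : X₁ × X₂ × X₃ → ℝ)
    (hfm : Measurable f) (hφm : Measurable φ)
    (hf0 : ∀ p, 0 ≤ f p) (hφ0 : ∀ p, 0 ≤ φ p)
    (hfprob : ∫ p, f p ∂(ν₁.prod (ν₂.prod ν₃)) = 1)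
    (f₂ : X₂ → ℝ) (hf₂ : ∀ x₂, f₂ x₂ = ∫ x₁, (∫ x₃, f (x₁, x₂, x₃) ∂ν₃) ∂ν₁)
    (f₁₂ : X₁ × X₂ → ℝ) (hf₁₂ : ∀ x₁ x₂, f₁₂ (x₁, x₂) = ∫ x₃, f (x₁, x₂, x₃) ∂ν₃)
    (f₂₃ : X₂ × X₃ → ℝ) (hf₂₃ : ∀ q, f₂₃ q = ∫ x₁, f (x₁, q) ∂ν₁)
    (hint1 : Integrable (fun p => φ p * f p * log (f p / f₂₃ p.2)) (ν₁.prod (ν₂.prod ν₃)))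
    (hint2 : Integrable (fun p => φ p * f p * log (f₁₂ (p.1, p.2.1) / f₂ p.2.1))
        (ν₁.prod (ν₂.prod ν₃)))
    (hint3 : Integrable (fun p => φ p *
        (f p - f₂ p.2.1 * (f₁₂ (p.1, p.2.1) / f₂ p.2.1) * (f₂₃ p.2 / f₂ p.2.1)))
        (ν₁.prod (ν₂.prod ν₃)))
    (hcond : 0 ≤ ∫ p, φ p *
        (f p - f₂ p.2.1 * (f₁₂ (p.1, p.2.1) / f₂ p.2.1) * (f₂₃ p.2 / f₂ p.2.1))
        ∂(ν₁.prod (ν₂.prod ν₃))) :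
    (-∫ p, φ p * f p * log (f p / f₂₃ p.2) ∂(ν₁.prod (ν₂.prod ν₃)))
        ≤ -∫ p, φ p * f p * log (f₁₂ (p.1, p.2.1) / f₂ p.2.1) ∂(ν₁.prod (ν₂.prod ν₃)) ∧
      ((-∫ p, φ p * f p * log (f p / f₂₃ p.2) ∂(ν₁.prod (ν₂.prod ν₃)))
          = -∫ p, φ p * f p * log (f₁₂ (p.1, p.2.1) / f₂ p.2.1) ∂(ν₁.prod (ν₂.prod ν₃)) ↔
        ∀ᵐ p ∂(ν₁.prod (ν₂.prod ν₃)), 0 < f p →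
          φ p * (f p - f₂ p.2.1 * (f₁₂ (p.1, p.2.1) / f₂ p.2.1) * (f₂₃ p.2 / f₂ p.2.1)) = 0) := by

  have μpr : True := trivial
  have hfint : Integrable f (ν₁.prod (ν₂.prod ν₃)) := by
    by_contra h
    rw [integral_undef h] at hfprob
    exact one_ne_zero hfprob.symm
  have hf₂₃0 : ∀ q, 0 ≤ f₂₃ q := fun q => by
    rw [hf₂₃]; exact integral_nonneg fun _ => hf0 _
  have hf₁₂0 : ∀ w : X₁ × X₂, 0 ≤ f₁₂ w := fun w => by
    rw [show f₁₂ w = f₁₂ (w.1, w.2) from rfl, hf₁₂]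
    exact integral_nonneg fun _ => hf0 _
  have hf₂0 : ∀ x₂, 0 ≤ f₂ x₂ := fun x₂ => by
    rw [hf₂]; exact integral_nonneg fun _ => integral_nonneg fun _ => hf0 _
  have hf₁₂m : Measurable f₁₂ := by
    have he : f₁₂ = fun w : X₁ × X₂ => ∫ x₃, f (w.1, w.2, x₃) ∂ν₃ := by
      funext w; exact hf₁₂ w.1 w.2
    rw [he]
    have hF : StronglyMeasurable fun z : (X₁ × X₂) × X₃ => f (z.1.1, z.1.2, z.2) :=
      (hfm.comp ((measurable_fst.comp measurable_fst).prodMk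
        ((measurable_snd.comp measurable_fst).prodMk measurable_snd))).stronglyMeasurable
    exact hF.integral_prod_right'.measurable
  have hf₂eq : ∀ x₂, f₂ x₂ = ∫ x₁, f₁₂ (x₁, x₂) ∂ν₁ := fun x₂ => by
    simp_rw [hf₁₂]; exact hf₂ x₂
  have hf₂m : Measurable f₂ := by
    have he : f₂ = fun x₂ => ∫ x₁, f₁₂ (x₁, x₂) ∂ν₁ := funext hf₂eq
    rw [he]
    exact hf₁₂m.stronglyMeasurable.integral_prod_left'.measurable
  have hFm : Measurable fun p : X₁ × X₂ × X₃ => ENNReal.ofReal (f p) :=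
    ENNReal.measurable_ofReal.comp hfm
  have hofReal : ∫⁻ p, ENNReal.ofReal (f p) ∂(ν₁.prod (ν₂.prod ν₃)) = 1 := by
    rw [← ofReal_integral_eq_lintegral_ofReal hfint (Filter.Eventually.of_forall hf0), hfprob,
      ENNReal.ofReal_one]
  have hf₁₂int : Integrable f₁₂ (ν₁.prod ν₂) := by
    refine ⟨hf₁₂m.aestronglyMeasurable, ?_⟩
    rw [hasFiniteIntegral_def]
    have hHm : Measurable fun z : (X₁ × X₂) × X₃ => ENNReal.ofReal (f (z.1.1, z.1.2, z.2)) :=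
      hFm.comp ((measurable_fst.comp measurable_fst).prodMk
        ((measurable_snd.comp measurable_fst).prodMk measurable_snd))
    have key : ∀ w : X₁ × X₂,
        (‖f₁₂ w‖₊ : ENNReal) ≤ ∫⁻ x₃, ENNReal.ofReal (f (w.1, w.2, x₃)) ∂ν₃ := by
      intro w
      rw [show (‖f₁₂ w‖₊ : ENNReal) = ENNReal.ofReal (f₁₂ w) from Real.enorm_eq_ofReal (hf₁₂0 w)]
      by_cases hi : Integrable (fun x₃ => f (w.1, w.2, x₃)) ν₃
      · rw [show f₁₂ w = ∫ x₃, f (w.1, w.2, x₃) ∂ν₃ from hf₁₂ w.1 w.2,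
          ofReal_integral_eq_lintegral_ofReal hi (Filter.Eventually.of_forall fun x₃ => hf0 _)]
      · rw [show f₁₂ w = ∫ x₃, f (w.1, w.2, x₃) ∂ν₃ from hf₁₂ w.1 w.2, integral_undef hi]
        simp
    calc ∫⁻ w, (‖f₁₂ w‖₊ : ENNReal) ∂(ν₁.prod ν₂)
        ≤ ∫⁻ w, ∫⁻ x₃, ENNReal.ofReal (f (w.1, w.2, x₃)) ∂ν₃ ∂(ν₁.prod ν₂) :=
          lintegral_mono key
      _ = ∫⁻ x₁, ∫⁻ x₂, ∫⁻ x₃, ENNReal.ofReal (f (x₁, x₂, x₃)) ∂ν₃ ∂ν₂ ∂ν₁ := by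
          rw [lintegral_prod _ hHm.lintegral_prod_right'.aemeasurable]
      _ = ∫⁻ p, ENNReal.ofReal (f p) ∂(ν₁.prod (ν₂.prod ν₃)) := by
          rw [lintegral_prod _ hFm.aemeasurable]
          congr 1
          funext x₁
          exact (lintegral_prod (fun z => ENNReal.ofReal (f (x₁, z)))
            ((hFm.comp measurable_prodMk_left).aemeasurable)).symm
      _ = 1 := hofReal
      _ < ⊤ := ENNReal.one_lt_top
  -- positivity of marginals on the support of f
  have P1 : ∀ᵐ p ∂(ν₁.prod (ν₂.prod ν₃)), 0 < f p → 0 < f₂₃ p.2 := by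
    filter_upwards [marg_fst_pos hfm hf0 hfint] with p hp hfp
    rw [hf₂₃]; exact hp hfp
  have P2 : ∀ᵐ p ∂(ν₁.prod (ν₂.prod ν₃)), 0 < f p → 0 < f₁₂ (p.1, p.2.1) := by
    refine (Measure.ae_prod_iff_ae_ae ?_).mpr ?_
    · exact measurableSet_imp' (measurableSet_lt measurable_const hfm)
        (measurableSet_lt measurable_const
          (hf₁₂m.comp (measurable_fst.prodMk (measurable_fst.comp measurable_snd))))
    · filter_upwards [hfint.prod_right_ae] with x₁ hx₁
      filter_upwards [marg_snd_pos (μ := ν₂) (ν := ν₃) (g := fun z => f (x₁, z))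
        (hfm.comp measurable_prodMk_left) (fun z => hf0 _) hx₁] with z hz hpos
      rw [hf₁₂]
      exact hz hpos
  have P3 : ∀ᵐ p ∂(ν₁.prod (ν₂.prod ν₃)), 0 < f₁₂ (p.1, p.2.1) → 0 < f₂ p.2.1 := by
    have P3' : ∀ᵐ w ∂ν₁.prod ν₂, 0 < f₁₂ w → 0 < f₂ w.2 := by
      filter_upwards [marg_fst_pos hf₁₂m hf₁₂0 hf₁₂int] with w hw hpos
      rw [hf₂eq]
      exact hw hpos
    exact lift_pair ν₃ (measurableSet_imp' (measurableSet_lt measurable_const hf₁₂m)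
      (measurableSet_lt measurable_const (hf₂m.comp measurable_snd))) P3'
  -- pointwise key facts
  have hae : ∀ᵐ p ∂(ν₁.prod (ν₂.prod ν₃)),
      (φ p * (f p - f₂ p.2.1 * (f₁₂ (p.1, p.2.1) / f₂ p.2.1) * (f₂₃ p.2 / f₂ p.2.1))
        ≤ φ p * f p * log (f p / f₂₃ p.2) - φ p * f p * log (f₁₂ (p.1, p.2.1) / f₂ p.2.1)) ∧
      (φ p * f p * log (f p / f₂₃ p.2) - φ p * f p * log (f₁₂ (p.1, p.2.1) / f₂ p.2.1)
          = φ p * (f p - f₂ p.2.1 * (f₁₂ (p.1, p.2.1) / f₂ p.2.1) * (f₂₃ p.2 / f₂ p.2.1)) →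
        (0 < f p →
          φ p * (f p - f₂ p.2.1 * (f₁₂ (p.1, p.2.1) / f₂ p.2.1) * (f₂₃ p.2 / f₂ p.2.1)) = 0)) ∧
      ((0 < f p →
          φ p * (f p - f₂ p.2.1 * (f₁₂ (p.1, p.2.1) / f₂ p.2.1) * (f₂₃ p.2 / f₂ p.2.1)) = 0) →
        φ p * f p * log (f p / f₂₃ p.2) = φ p * f p * log (f₁₂ (p.1, p.2.1) / f₂ p.2.1)) := by
    filter_upwards [P1, P2, P3] with p h1 h2 h3
    exact key_ineq (hf0 p) (hφ0 p) (hf₁₂0 _) (hf₂0 _) (hf₂₃0 _) h1 h2 h3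
  have hsub : ∫ p, (φ p * f p * log (f p / f₂₃ p.2)
        - φ p * f p * log (f₁₂ (p.1, p.2.1) / f₂ p.2.1)) ∂(ν₁.prod (ν₂.prod ν₃))
      = (∫ p, φ p * f p * log (f p / f₂₃ p.2) ∂(ν₁.prod (ν₂.prod ν₃)))
        - ∫ p, φ p * f p * log (f₁₂ (p.1, p.2.1) / f₂ p.2.1) ∂(ν₁.prod (ν₂.prod ν₃)) :=
    integral_sub hint1 hint2
  have hmono : (∫ p, φ p *
        (f p - f₂ p.2.1 * (f₁₂ (p.1, p.2.1) / f₂ p.2.1) * (f₂₃ p.2 / f₂ p.2.1))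
        ∂(ν₁.prod (ν₂.prod ν₃)))
      ≤ ∫ p, (φ p * f p * log (f p / f₂₃ p.2)
        - φ p * f p * log (f₁₂ (p.1, p.2.1) / f₂ p.2.1)) ∂(ν₁.prod (ν₂.prod ν₃)) :=
    integral_mono_ae hint3 (hint1.sub hint2) (hae.mono fun p hp => hp.1)
  constructor
  · have := hcond.trans (hmono.trans_eq hsub)
    linarith
  · constructor
    · intro heq
      have hII : (∫ p, φ p * f p * log (f p / f₂₃ p.2) ∂(ν₁.prod (ν₂.prod ν₃)))
          = ∫ p, φ p * f p * log (f₁₂ (p.1, p.2.1) / f₂ p.2.1) ∂(ν₁.prod (ν₂.prod ν₃)) :=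
        neg_injective heq
      have hint12 : Integrable (fun p => φ p * f p * log (f p / f₂₃ p.2)
          - φ p * f p * log (f₁₂ (p.1, p.2.1) / f₂ p.2.1)) (ν₁.prod (ν₂.prod ν₃)) :=
        hint1.sub hint2
      have hzero : ∫ p, ((φ p * f p * log (f p / f₂₃ p.2)
            - φ p * f p * log (f₁₂ (p.1, p.2.1) / f₂ p.2.1))
          - φ p * (f p - f₂ p.2.1 * (f₁₂ (p.1, p.2.1) / f₂ p.2.1) * (f₂₃ p.2 / f₂ p.2.1)))
          ∂(ν₁.prod (ν₂.prod ν₃)) = 0 := by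
        rw [integral_sub hint12 hint3, hsub, hII]
        have h1 : (∫ p, φ p *
            (f p - f₂ p.2.1 * (f₁₂ (p.1, p.2.1) / f₂ p.2.1) * (f₂₃ p.2 / f₂ p.2.1))
            ∂(ν₁.prod (ν₂.prod ν₃))) ≤ 0 := by
          have := hmono.trans_eq hsub
          linarith
        linarith [hcond]
      have hnn : 0 ≤ᵐ[ν₁.prod (ν₂.prod ν₃)] fun p =>
          ((φ p * f p * log (f p / f₂₃ p.2)
            - φ p * f p * log (f₁₂ (p.1, p.2.1) / f₂ p.2.1))
          - φ p * (f p - f₂ p.2.1 * (f₁₂ (p.1, p.2.1) / f₂ p.2.1) * (f₂₃ p.2 / f₂ p.2.1))) :=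
        hae.mono fun p hp => sub_nonneg.2 hp.1
      have hzae := (integral_eq_zero_iff_of_nonneg_ae hnn (hint12.sub hint3)).mp hzero
      filter_upwards [hzae, hae] with p hz hp hfp
      refine hp.2.1 ?_ hfp
      have hz' : (φ p * f p * log (f p / f₂₃ p.2)
            - φ p * f p * log (f₁₂ (p.1, p.2.1) / f₂ p.2.1))
          - φ p * (f p - f₂ p.2.1 * (f₁₂ (p.1, p.2.1) / f₂ p.2.1) * (f₂₃ p.2 / f₂ p.2.1)) = 0 :=
        hz
      linarith
    · intro h
      have hII : (∫ p, φ p * f p * log (f p / f₂₃ p.2) ∂(ν₁.prod (ν₂.prod ν₃)))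
          = ∫ p, φ p * f p * log (f₁₂ (p.1, p.2.1) / f₂ p.2.1) ∂(ν₁.prod (ν₂.prod ν₃)) := by
        refine integral_congr_ae ?_
        filter_upwards [hae, h] with p hp hh
        exact hp.2.2 hh
      rw [hII]
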